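/- Let M be a reductive monoid, i.e., for every f, g ∈ M there exists h ∈ M with f = hg or g = hf. Let L be a first-order language whose only relation symbols besides equality are unary, whose function symbols are unary and indexed by the elements of M, and which has one constant symbol w. Let B be a theory in L satisfying: ∀x (A(x) → A(w)) for every unary relation symbol A; f(w) ≈ w for every f ∈ M; i(x) ≈ x for the identity i of M, and f(g(x)) ≈ h(x) whenever h = gf in M; and ∀x∀y (f(x) ≈ f(y) → x ≈ y) for every f ∈ M. Then every quasi-identity of L is equivalent modulo B to a finite set of quasi-identities each containing at most one variable. -/

import Mathlib

open FirstOrder FirstOrder.Language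

universe u w

/-- A quasi-identity whose matrix has `n` universally quantified variables. -/
def IsQuasiIdentityN {L : FirstOrder.Language.{u, u}} (n : ℕ) (σ : L.Sentence) : Prop :=
  ∃ (hyps : List (L.BoundedFormula Empty n)) (concl : L.BoundedFormula Empty n),
    (∀ φ ∈ hyps, φ.IsAtomic) ∧ concl.IsAtomic ∧
      σ = BoundedFormula.alls ((hyps.foldr (· ⊓ ·) ⊤).imp concl)

/-- A quasi-identity: the universal closure of an implication whose premise is a
finite (possibly empty) conjunction of atomic formulas and whose conclusion is an
atomic formula. -/
def IsQuasiIdentity {L : FirstOrder.Language.{u, u}} (σ : L.Sentence) : Prop :=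
  ∃ n, IsQuasiIdentityN n σ

/-- Two sets `Φ`, `Ψ` of sentences are equivalent modulo a theory `T₀` if
`T₀ ∪ Φ` and `T₀ ∪ Ψ` have exactly the same models. -/
def EquivModulo {L : FirstOrder.Language.{u, u}} (T₀ Φ Ψ : L.Theory) : Prop :=
  ∀ (M : Type w) [L.Structure M] [Nonempty M], M ⊨ T₀ ∪ Φ ↔ M ⊨ T₀ ∪ Ψ

/-- A monoid is reductive if for every pair `f, g` there is `h` such that
either `f = hg` or `g = hf`. -/
def IsReductive (M : Type u) [Monoid M] : Prop :=
  ∀ f g : M, ∃ h : M, f = h * g ∨ g = h * f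

/-- The language with unary relation symbols indexed by `R`, a unary function
symbol for each element of `M`, and one constant symbol `w`. -/
def LangM (R : Type u) (M : Type u) : FirstOrder.Language.{u, u} where
  Functions := fun n => match n with
    | 0 => PUnit
    | 1 => M
    | _ + 2 => PEmpty
  Relations := fun n => match n with
    | 1 => R
    | _ => PEmpty

/-- The constant term `w`. -/
def wTerm (R M : Type u) {α : Type*} : (LangM R M).Term α :=
  Constants.term (PUnit.unit : (LangM R M).Constants)

/-- Application of the unary function symbol corresponding to `f ∈ M`. -/
def fnApp {R M : Type u} {α : Type*} (f : M) (t : (LangM R M).Term α) :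
    (LangM R M).Term α :=
  Functions.apply₁ (show (LangM R M).Functions 1 from f) t

/-- The atomic formula `A(t)` for the unary relation symbol indexed by `r ∈ R`. -/
def relAtom {R M : Type u} {n : ℕ} (r : R) (t : (LangM R M).Term (Empty ⊕ Fin n)) :
    (LangM R M).BoundedFormula Empty n :=
  Relations.boundedFormula₁ (show (LangM R M).Relations 1 from r) t

/-- The variable `x` in a context of one bound variable. -/
def x1 (R M : Type u) : (LangM R M).Term (Empty ⊕ Fin 1) := &0

/-- The variable `x` in a context of two bound variables. -/
def x2 (R M : Type u) : (LangM R M).Term (Empty ⊕ Fin 2) := &0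

/-- The variable `y` in a context of two bound variables. -/
def y2 (R M : Type u) : (LangM R M).Term (Empty ⊕ Fin 2) := &1

set_option linter.unusedSectionVars false

namespace QIRed

variable {R M : Type u} [Monoid M]

/-- normal terms: `none` = `w`, `some (f,i)` = `f(xᵢ)` -/
def NTerm (M : Type u) (n : ℕ) := Option (M × Fin n)

def NTerm.toTerm {n : ℕ} : NTerm M n → (LangM R M).Term (Empty ⊕ Fin n)
  | none => wTerm R M
  | some (f, i) => fnApp f (Term.var (Sum.inr i))

inductive NAtom (R M : Type u) (n : ℕ) : Type u
  | eq : NTerm M n → NTerm M n → NAtom R M n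
  | rel : R → NTerm M n → NAtom R M n

def NAtom.toFormula {n : ℕ} : NAtom R M n → (LangM R M).BoundedFormula Empty n
  | .eq s t => s.toTerm.bdEqual t.toTerm
  | .rel r t => relAtom r t.toTerm

theorem NAtom.toFormula_isAtomic {n : ℕ} (γ : NAtom R M n) : γ.toFormula.IsAtomic := by
  cases γ with
  | eq s t => exact BoundedFormula.IsAtomic.equal _ _
  | rel r t => exact BoundedFormula.IsAtomic.rel _ _


/-! ### term normalization -/

def normTerm {n : ℕ} : (LangM R M).Term (Empty ⊕ Fin n) → NTerm M n
  | .var (Sum.inl e) => e.elim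
  | .var (Sum.inr i) => some (1, i)
  | @Term.func _ _ 0 _ _ => none
  | @Term.func _ _ 1 f ts =>
    match normTerm (ts 0) with
    | none => none
    | some (g, i) => some (g * (show M from f), i)
  | @Term.func _ _ (_ + 2) f _ => (show PEmpty from f).elim

section Semantics

variable {n : ℕ}

def act (R : Type u) {M : Type u} {N : Type w} [(LangM R M).Structure N]
    (f : M) (a : N) : N :=
  Structure.funMap (L := LangM R M) (M := N) (show (LangM R M).Functions 1 from f) ![a]

def wpt (R M : Type u) {N : Type w} [(LangM R M).Structure N] : N :=
  Structure.funMap (L := LangM R M) (M := N)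
    (show (LangM R M).Functions 0 from PUnit.unit) ![]

def rmap (R : Type u) (M : Type u) {N : Type w} [(LangM R M).Structure N]
    (r : R) (a : N) : Prop :=
  Structure.RelMap (L := LangM R M) (M := N) (show (LangM R M).Relations 1 from r) ![a]

def NTerm.eval (R : Type u) {M : Type u} {N : Type w} [(LangM R M).Structure N]
    (xs : Fin n → N) : NTerm M n → N
  | none => wpt R M
  | some (f, i) => act R f (xs i)

def NAtom.Holds {R M : Type u} {N : Type w} [(LangM R M).Structure N]
    (xs : Fin n → N) : NAtom R M n → Prop
  | .eq s t => s.eval R xs = t.eval R xs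
  | .rel r t => rmap R M r (t.eval R xs)

/-- the semantic consequences of `B` that we use -/
structure Good (R M : Type u) [Monoid M] (N : Type w) [(LangM R M).Structure N] : Prop where
  act_one : ∀ a : N, act R (1 : M) a = a
  act_comp : ∀ (f g : M) (a : N), act R f (act R g a) = act R (g * f) a
  act_w : ∀ f : M, act R f (wpt R M : N) = wpt R M
  act_inj : ∀ f : M, Function.Injective (act R f : N → N)
  rel_w : ∀ (r : R) (a : N), rmap R M r a → rmap R M r (wpt R M : N)

variable {N : Type w} [(LangM R M).Structure N]

theorem realize_toTerm (v : Empty → N) (xs : Fin n → N) (t : NTerm M n) :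
    Term.realize (L := LangM R M) (Sum.elim v xs) (t.toTerm) = t.eval R xs := by
  cases t with
  | none =>
      simp only [NTerm.toTerm, wTerm, Constants.term, Term.realize, NTerm.eval, wpt]
      congr 1
      exact funext fun i => i.elim0
  | some p =>
      obtain ⟨f, i⟩ := p
      simp only [NTerm.toTerm, fnApp, Term.realize_functions_apply₁, Term.realize_var,
        Sum.elim_inr, NTerm.eval, act]
      erw [Term.realize_functions_apply₁]
      rfl

theorem realize_toFormula (v : Empty → N) (xs : Fin n → N) (γ : NAtom R M n) :
    γ.toFormula.Realize v xs ↔ γ.Holds xs := by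
  cases γ with
  | eq s t =>
      simp only [NAtom.toFormula, BoundedFormula.realize_bdEqual, realize_toTerm, NAtom.Holds]
  | rel r t =>
      simp only [NAtom.toFormula, relAtom, BoundedFormula.realize_rel₁, realize_toTerm,
        NAtom.Holds, rmap]
      erw [BoundedFormula.realize_rel₁, realize_toTerm]


/-! ### substitution -/

def NTerm.subst {m : ℕ} (ρ : Fin n → NTerm M m) : NTerm M n → NTerm M m
  | none => none
  | some (f, i) =>
    match ρ i with
    | none => none
    | some (g, k) => some (g * f, k)

def NAtom.subst {m : ℕ} (ρ : Fin n → NTerm M m) : NAtom R M n → NAtom R M m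
  | .eq s t => .eq (s.subst ρ) (t.subst ρ)
  | .rel r t => .rel r (t.subst ρ)

theorem eval_subst (hN : Good R M N) {m : ℕ} (ρ : Fin n → NTerm M m)
    (xs : Fin m → N) (t : NTerm M n) :
    (t.subst ρ).eval R xs = t.eval R (fun k => (ρ k).eval R xs) := by
  cases t with
  | none => rfl
  | some p =>
      obtain ⟨f, i⟩ := p
      simp only [NTerm.subst, NTerm.eval]
      cases h : ρ i with
      | none => simp [NTerm.eval, h, hN.act_w]
      | some q =>
          obtain ⟨g, k⟩ := q
          simp [NTerm.eval, h, hN.act_comp]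

theorem holds_subst (hN : Good R M N) {m : ℕ} (ρ : Fin n → NTerm M m)
    (xs : Fin m → N) (γ : NAtom R M n) :
    (γ.subst ρ).Holds xs ↔ γ.Holds (fun k => (ρ k).eval R xs) := by
  cases γ with
  | eq s t => simp [NAtom.subst, NAtom.Holds, eval_subst hN]
  | rel r t => simp [NAtom.subst, NAtom.Holds, eval_subst hN]



theorem realize_normTerm (hN : Good R M N) (v : Empty → N) (xs : Fin n → N) :
    ∀ t : (LangM R M).Term (Empty ⊕ Fin n),
      Term.realize (L := LangM R M) (Sum.elim v xs) t = (normTerm t).eval R xs := by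
  intro t
  induction t with
  | var x =>
      cases x with
      | inl e => exact e.elim
      | inr i =>
          show xs i = (normTerm (Term.var (Sum.inr i))).eval R xs
          rw [show (normTerm (Term.var (Sum.inr i)) : NTerm M n) = some (1, i) from rfl]
          exact (hN.act_one (xs i)).symm
  | func f ts ih =>
      rename_i l
      match l, f, ts, ih with
      | 0, f, ts, ih =>
          show Structure.funMap f (fun i => Term.realize (Sum.elim v xs) (ts i)) = _
          rw [show (normTerm (Term.func f ts) : NTerm M n) = none from rfl]
          show _ = wpt R M
          unfold wpt
          congr 1
          exact funext fun i => i.elim0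
      | 1, f, ts, ih =>
          have h0 : Term.realize (L := LangM R M) (Sum.elim v xs) (ts 0)
              = (normTerm (ts 0)).eval R xs := ih 0
          show Structure.funMap f (fun i => Term.realize (Sum.elim v xs) (ts i)) = _
          have hfm : (fun i => Term.realize (L := LangM R M) (Sum.elim v xs) (ts i))
              = ![(normTerm (ts 0)).eval R xs] := by
            funext i
            fin_cases i
            simpa using h0
          rw [hfm]
          show act R (show M from f) ((normTerm (ts 0)).eval R xs)
              = (normTerm (Term.func f ts)).eval R xs
          rw [show (normTerm (Term.func f ts) : NTerm M n)
              = (match normTerm (ts 0) with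
                 | none => none
                 | some (g, i) => some (g * (show M from f), i)) from rfl]
          cases h : normTerm (ts 0) with
          | none =>
              simp only [h, NTerm.eval]
              exact hN.act_w _
          | some q =>
              obtain ⟨g, i⟩ := q
              simp only [h, NTerm.eval]
              exact hN.act_comp _ _ _
      | (l + 2), f, ts, ih => exact (show PEmpty from f).elim

theorem normalize_atomic {φ : (LangM R M).BoundedFormula Empty n} (hφ : φ.IsAtomic) :
    ∃ γ : NAtom R M n, ∀ (N : Type w) [(LangM R M).Structure N], Good R M N →
      ∀ (v : Empty → N) (xs : Fin n → N), (φ.Realize v xs ↔ γ.Holds xs) := by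
  induction hφ with
  | equal t₁ t₂ =>
      refine ⟨.eq (normTerm t₁) (normTerm t₂), fun N _ hN v xs => ?_⟩
      simp [BoundedFormula.realize_bdEqual, realize_normTerm hN, NAtom.Holds]
  | rel Rl ts =>
      rename_i l
      match l, Rl, ts with
      | 0, Rl, ts => exact (show PEmpty from Rl).elim
      | 1, Rl, ts =>
          refine ⟨.rel (show R from Rl) (normTerm (ts 0)), fun N _ hN v xs => ?_⟩
          rw [BoundedFormula.realize_rel]
          have : (fun i => Term.realize (L := LangM R M) (Sum.elim v xs) (ts i))
              = ![(normTerm (ts 0)).eval R xs] := by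
            funext i
            fin_cases i
            simpa using realize_normTerm hN v xs (ts 0)
          rw [this]
          exact Iff.rfl
      | (l + 2), Rl, ts => exact (show PEmpty from Rl).elim


/-! ### the satisfaction predicate for normalized quasi-identities -/

def SatN {R M : Type u} (N : Type w) [(LangM R M).Structure N] {n : ℕ}
    (hyps : List (NAtom R M n)) (concl : NAtom R M n) : Prop :=
  ∀ xs : Fin n → N, (∀ γ ∈ hyps, γ.Holds xs) → concl.Holds xs

/-- hypotheses that survive phase 1: involve at most one variable -/
def NAtom.IsLocal {R M : Type u} {n : ℕ} : NAtom R M n → Prop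
  | .eq (some (_, i)) (some (_, j)) => i = j
  | .eq none none => True
  | .eq _ _ => False
  | .rel _ _ => True

theorem elim_step [DecidableEq (NAtom R M n)] (hN : Good R M N)
    {hyps : List (NAtom R M n)} {concl γ : NAtom R M n}
    (hmem : γ ∈ hyps) (ρ : Fin n → NTerm M n)
    (H1 : ∀ xs : Fin n → N, γ.Holds xs → ∀ k, (ρ k).eval R xs = xs k)
    (H2 : ∀ xs : Fin n → N, γ.Holds (fun k => (ρ k).eval R xs)) :
    SatN N hyps concl ↔
      SatN N ((hyps.erase γ).map (NAtom.subst ρ)) (concl.subst ρ) := by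
  constructor
  · intro h xs hall
    rw [holds_subst hN]
    refine h _ fun γ' hγ' => ?_
    by_cases hne : γ' = γ
    · subst hne; exact H2 xs
    · have : γ'.subst ρ ∈ (hyps.erase γ).map (NAtom.subst ρ) :=
        List.mem_map_of_mem ((List.mem_erase_of_ne hne).2 hγ')
      exact (holds_subst hN ρ xs γ').1 (hall _ this)
  · intro h xs hall
    have hγ := hall γ hmem
    have hys : (fun k => (ρ k).eval R xs) = xs := funext (H1 xs hγ)
    have hc := h xs fun δ hδ => by
      obtain ⟨γ', hγ', rfl⟩ := List.mem_map.1 hδ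
      rw [holds_subst hN, hys]
      exact hall γ' (List.mem_of_mem_erase hγ')
    rw [holds_subst hN, hys] at hc
    exact hc

end Semantics

/-! ### phase 2 -/

section Phase2

variable {n : ℕ}

def rho1 (M : Type u) [Monoid M] {n : ℕ} (i : Fin n) : Fin n → NTerm M 1 :=
  fun k => if k = i then some (1, 0) else none

def rhoW (M : Type u) {n : ℕ} : Fin n → NTerm M 1 :=
  fun _ => none

variable {N : Type w} [(LangM R M).Structure N]

theorem forward_subst (hN : Good R M N) {m : ℕ} (ρ : Fin n → NTerm M m)
    {hyps : List (NAtom R M n)} {concl : NAtom R M n} (h : SatN N hyps concl) :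
    SatN N (hyps.map (NAtom.subst ρ)) (concl.subst ρ) := by
  intro u hall
  rw [holds_subst hN]
  refine h _ fun γ' hγ' => ?_
  exact (holds_subst hN ρ u γ').1 (hall _ (List.mem_map_of_mem hγ'))

theorem subst_rho1_same (i : Fin n) (f : M) :
    NTerm.subst (rho1 M i) (some (f, i)) = some (f, 0) := by
  simp [NTerm.subst, rho1, one_mul]
  rfl

theorem subst_rho1_ne {k i : Fin n} (hk : k ≠ i) (f : M) :
    NTerm.subst (rho1 M i) (some (f, k)) = none := by
  simp [NTerm.subst, rho1, hk]
  rfl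

theorem subst_rhoW_some (k : Fin n) (f : M) :
    NTerm.subst (rhoW M) (some (f, k)) = none := rfl

theorem holds_eq {s t : NTerm M n} {xs : Fin n → N} :
    (NAtom.eq (R := R) s t).Holds xs ↔ s.eval R xs = t.eval R xs := Iff.rfl

theorem holds_rel {r : R} {t : NTerm M n} {xs : Fin n → N} :
    (NAtom.rel (M := M) r t).Holds xs ↔ rmap R M r (t.eval R xs) := Iff.rfl

theorem loc_subst_rhoW (hN : Good R M N) {γ : NAtom R M n} (hloc : γ.IsLocal)
    {xs : Fin n → N} (hγ : γ.Holds xs) (u : Fin 1 → N) :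
    (γ.subst (rhoW M)).Holds u := by
  cases γ with
  | eq s t =>
      match s, t, hloc with
      | some (f, i), some (g, j), hloc => exact rfl
      | none, none, hloc => exact rfl
  | rel r t =>
      match t with
      | some (f, i) => exact hN.rel_w r _ hγ
      | none => exact hγ

theorem loc_subst_rho1 (hN : Good R M N) {γ : NAtom R M n} (hloc : γ.IsLocal)
    {xs : Fin n → N} (hγ : γ.Holds xs) (i : Fin n) :
    (γ.subst (rho1 M i)).Holds (fun _ => xs i) := by
  cases γ with
  | eq s t =>
      match s, t, hloc with
      | some (f, k), some (g, k'), hloc =>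
          cases hloc
          show (NAtom.eq (R := R) (NTerm.subst (rho1 M i) (some (f, k)))
              (NTerm.subst (rho1 M i) (some (g, k)))).Holds _
          by_cases hk : k = i
          · subst hk
            rw [subst_rho1_same, subst_rho1_same]
            exact hγ
          · rw [subst_rho1_ne hk, subst_rho1_ne hk]
            exact rfl
      | none, none, hloc => exact rfl
  | rel r t =>
      match t with
      | some (f, k) =>
          show (NAtom.rel (M := M) r (NTerm.subst (rho1 M i) (some (f, k)))).Holds _
          by_cases hk : k = i
          · subst hk
            rw [subst_rho1_same]
            exact hγ
          · rw [subst_rho1_ne hk]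
            exact hN.rel_w r _ hγ
      | none => exact hγ

theorem phase2 {hyps : List (NAtom R M n)} (concl : NAtom R M n)
    (hloc : ∀ γ ∈ hyps, γ.IsLocal) :
    ∃ out : List (List (NAtom R M 1) × NAtom R M 1),
      ∀ (N' : Type w) (_ : (LangM R M).Structure N'), Good R M N' →
        (SatN N' hyps concl ↔ ∀ p ∈ out, SatN N' p.1 p.2) := by
  classical
  have hhyp1 : ∀ (N' : Type w) (inst : (LangM R M).Structure N') (hN : Good R M N')
      (xs : Fin n → N') (_ : ∀ γ ∈ hyps, γ.Holds xs) (i : Fin n),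
      ∀ δ ∈ hyps.map (NAtom.subst (rho1 M i)), δ.Holds (fun _ => xs i) := by
    intro N' inst hN xs hall i δ hδ
    obtain ⟨γ', hγ', rfl⟩ := List.mem_map.1 hδ
    exact loc_subst_rho1 hN (hloc _ hγ') (hall _ hγ') i
  have hhypW : ∀ (N' : Type w) (inst : (LangM R M).Structure N') (hN : Good R M N')
      (xs : Fin n → N') (_ : ∀ γ ∈ hyps, γ.Holds xs) (u : Fin 1 → N'),
      ∀ δ ∈ hyps.map (NAtom.subst (rhoW M)), δ.Holds u := by
    intro N' inst hN xs hall u δ hδ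
    obtain ⟨γ', hγ', rfl⟩ := List.mem_map.1 hδ
    exact loc_subst_rhoW hN (hloc _ hγ') (hall _ hγ') u
  rcases concl with ⟨s, t⟩ | ⟨r, t⟩
  · rcases s with _ | ⟨f, i⟩
    · rcases t with _ | ⟨g, j⟩
      · -- eq none none : trivially true
        refine ⟨[], fun N' inst hN => ?_⟩
        simp only [List.not_mem_nil, false_implies, implies_true, iff_true]
        intro xs _
        exact rfl
      · -- eq none (some (g,j))
        refine ⟨[(hyps.map (NAtom.subst (rho1 M j)),
            NAtom.eq none (some (g, 0)))], fun N' inst hN => ?_⟩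
        have hc : (NAtom.eq (R := R) (none : NTerm M n) (some (g, j))).subst (rho1 M j)
            = NAtom.eq none (some (g, 0)) := by
          show NAtom.eq _ _ = _
          rw [subst_rho1_same]
          rfl
        constructor
        · intro h p hp
          rw [List.mem_singleton] at hp
          subst hp
          have := forward_subst hN (rho1 M j) h
          rwa [hc] at this
        · intro h xs hall
          exact h _ (List.mem_singleton_self _) (fun _ => xs j)
            (hhyp1 N' inst hN xs hall j)
    · rcases t with _ | ⟨g, j⟩
      · -- eq (some (f,i)) none
        refine ⟨[(hyps.map (NAtom.subst (rho1 M i)),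
            NAtom.eq (some (f, 0)) none)], fun N' inst hN => ?_⟩
        have hc : (NAtom.eq (R := R) (some (f, i) : NTerm M n) none).subst (rho1 M i)
            = NAtom.eq (some (f, 0)) none := by
          show NAtom.eq _ _ = _
          rw [subst_rho1_same]
          rfl
        constructor
        · intro h p hp
          rw [List.mem_singleton] at hp
          subst hp
          have := forward_subst hN (rho1 M i) h
          rwa [hc] at this
        · intro h xs hall
          exact h _ (List.mem_singleton_self _) (fun _ => xs i)
            (hhyp1 N' inst hN xs hall i)
      · -- eq (some (f,i)) (some (g,j))
        by_cases hij : j = i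
        · subst hij
          refine ⟨[(hyps.map (NAtom.subst (rho1 M j)),
              NAtom.eq (some (f, 0)) (some (g, 0)))], fun N' inst hN => ?_⟩
          have hc : (NAtom.eq (R := R) (some (f, j) : NTerm M n)
              (some (g, j))).subst (rho1 M j)
              = NAtom.eq (some (f, 0)) (some (g, 0)) := by
            show NAtom.eq _ _ = _
            rw [subst_rho1_same, subst_rho1_same]
          constructor
          · intro h p hp
            rw [List.mem_singleton] at hp
            subst hp
            have := forward_subst hN (rho1 M j) h
            rwa [hc] at this
          · intro h xs hall
            exact h _ (List.mem_singleton_self _) (fun _ => xs j)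
              (hhyp1 N' inst hN xs hall j)
        · refine ⟨[(hyps.map (NAtom.subst (rho1 M i)),
              NAtom.eq (some (f, 0)) none),
            (hyps.map (NAtom.subst (rho1 M j)),
              NAtom.eq none (some (g, 0)))], fun N' inst hN => ?_⟩
          have hc1 : (NAtom.eq (R := R) (some (f, i) : NTerm M n)
              (some (g, j))).subst (rho1 M i)
              = NAtom.eq (some (f, 0)) none := by
            show NAtom.eq _ _ = _
            rw [subst_rho1_same, subst_rho1_ne hij]
          have hc2 : (NAtom.eq (R := R) (some (f, i) : NTerm M n)
              (some (g, j))).subst (rho1 M j)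
              = NAtom.eq none (some (g, 0)) := by
            show NAtom.eq _ _ = _
            rw [subst_rho1_same, subst_rho1_ne (fun hh => hij hh.symm)]
          constructor
          · intro h p hp
            simp only [List.mem_cons, List.mem_singleton, List.not_mem_nil,
              or_false] at hp
            rcases hp with rfl | rfl
            · have := forward_subst hN (rho1 M i) h
              rwa [hc1] at this
            · have := forward_subst hN (rho1 M j) h
              rwa [hc2] at this
          · intro h xs hall
            have c1 := h _ (List.mem_cons_self) (fun _ => xs i)
              (hhyp1 N' inst hN xs hall i)
            have c2 := h _ (List.mem_cons_of_mem _ (List.mem_singleton_self _))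
              (fun _ => xs j) (hhyp1 N' inst hN xs hall j)
            exact (holds_eq.1 c1).trans (holds_eq.1 c2)
  · rcases t with _ | ⟨f, i⟩
    · -- rel r none
      refine ⟨[(hyps.map (NAtom.subst (rhoW M)),
          NAtom.rel r none)], fun N' inst hN => ?_⟩
      constructor
      · intro h p hp
        rw [List.mem_singleton] at hp
        subst hp
        exact forward_subst hN (rhoW M) h
      · intro h xs hall
        exact h _ (List.mem_singleton_self _) (fun _ => wpt R M)
          (hhypW N' inst hN xs hall _)
    · -- rel r (some (f,i))
      refine ⟨[(hyps.map (NAtom.subst (rho1 M i)),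
          NAtom.rel r (some (f, 0)))], fun N' inst hN => ?_⟩
      have hc : (NAtom.rel (M := M) r (some (f, i) : NTerm M n)).subst (rho1 M i)
          = NAtom.rel r (some (f, 0)) := by
        show NAtom.rel _ _ = _
        rw [subst_rho1_same]
      constructor
      · intro h p hp
        rw [List.mem_singleton] at hp
        subst hp
        have := forward_subst hN (rho1 M i) h
        rwa [hc] at this
      · intro h xs hall
        exact h _ (List.mem_singleton_self _) (fun _ => xs i)
          (hhyp1 N' inst hN xs hall i)

end Phase2


/-! ### the core reduction -/

section Core

variable {R M : Type u} [Monoid M] {n : ℕ}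

theorem core (hred : IsReductive M) :
    ∀ (L : ℕ) (hyps : List (NAtom R M n)) (concl : NAtom R M n), hyps.length ≤ L →
      ∃ out : List (List (NAtom R M 1) × NAtom R M 1),
        ∀ (N' : Type w) (_ : (LangM R M).Structure N'), Good R M N' →
          (SatN N' hyps concl ↔ ∀ p ∈ out, SatN N' p.1 p.2) := by
  intro L
  induction L with
  | zero =>
      intro hyps concl hlen
      have : hyps = [] := List.eq_nil_of_length_eq_zero (Nat.le_zero.1 hlen)
      subst this
      exact phase2 concl (by simp)
  | succ L ih =>
      intro hyps concl hlen
      classical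
      by_cases hall : ∀ γ ∈ hyps, γ.IsLocal
      · exact phase2 concl hall
      · push_neg at hall
        obtain ⟨γ, hmem, hnl⟩ := hall
        have hlen' : ∀ ρ : Fin n → NTerm M n,
            (((hyps.erase γ).map (NAtom.subst ρ)).length) ≤ L := by
          intro ρ
          rw [List.length_map, List.length_erase_of_mem hmem]
          omega
        rcases γ with ⟨s, t⟩ | ⟨r, t⟩
        · rcases s with _ | ⟨f, i⟩
          · rcases t with _ | ⟨g, j⟩
            · exact absurd trivial hnl
            · -- eq none (some (g,j)) : w ≈ g(x_j)
              set ρ : Fin n → NTerm M n :=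
                fun k => if k = j then none else some (1, k) with hρ
              obtain ⟨out, hout⟩ := ih _ (NAtom.subst ρ concl) (hlen' ρ)
              refine ⟨out, fun N' inst hN => ?_⟩
              refine Iff.trans ?_ (hout N' inst hN)
              refine elim_step hN hmem ρ ?_ ?_
              · intro xs hγ k
                by_cases hk : k = j
                · subst hk
                  simp only [hρ, if_pos rfl, NTerm.eval]
                  have hx : act R g (wpt R M : N') = act R g (xs k) := by
                    rw [hN.act_w]
                    exact hγ
                  exact hN.act_inj g hx
                · simp only [hρ, if_neg hk, NTerm.eval]
                  erw [if_neg hk]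
                  exact hN.act_one _
              · intro xs
                show (wpt R M : N') = act R g ((ρ j).eval R xs)
                simp only [hρ, if_pos rfl, NTerm.eval]
                exact (hN.act_w g).symm
          · rcases t with _ | ⟨g, j⟩
            · -- eq (some (f,i)) none : f(x_i) ≈ w
              set ρ : Fin n → NTerm M n :=
                fun k => if k = i then none else some (1, k) with hρ
              obtain ⟨out, hout⟩ := ih _ (NAtom.subst ρ concl) (hlen' ρ)
              refine ⟨out, fun N' inst hN => ?_⟩
              refine Iff.trans ?_ (hout N' inst hN)
              refine elim_step hN hmem ρ ?_ ?_
              · intro xs hγ k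
                by_cases hk : k = i
                · subst hk
                  simp only [hρ, if_pos rfl, NTerm.eval]
                  have hx : act R f (wpt R M : N') = act R f (xs k) := by
                    rw [hN.act_w]
                    exact hγ.symm
                  exact hN.act_inj f hx
                · simp only [hρ, if_neg hk, NTerm.eval]
                  erw [if_neg hk]
                  exact hN.act_one _
              · intro xs
                show act R f ((ρ i).eval R xs) = (wpt R M : N')
                simp only [hρ, if_pos rfl, NTerm.eval]
                exact hN.act_w f
            · -- eq (some (f,i)) (some (g,j)) with i ≠ j
              have hij : i ≠ j := hnl
              obtain ⟨h, hcase | hcase⟩ := hred f g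
              · -- f = h * g : substitute x_j ↦ h(x_i)
                set ρ : Fin n → NTerm M n :=
                  fun k => if k = j then some (h, i) else some (1, k) with hρ
                obtain ⟨out, hout⟩ := ih _ (NAtom.subst ρ concl) (hlen' ρ)
                refine ⟨out, fun N' inst hN => ?_⟩
                refine Iff.trans ?_ (hout N' inst hN)
                refine elim_step hN hmem ρ ?_ ?_
                · intro xs hγ k
                  by_cases hk : k = j
                  · subst hk
                    simp only [hρ, if_pos rfl, NTerm.eval]
                    have hx : act R g (act R h (xs i)) = act R g (xs k) := by
                      rw [hN.act_comp, ← hcase]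
                      exact hγ
                    exact hN.act_inj g hx
                  · simp only [hρ, if_neg hk, NTerm.eval]
                    erw [if_neg hk]
                    exact hN.act_one _
                · intro xs
                  show act R f ((ρ i).eval R xs) = act R g ((ρ j).eval R xs)
                  simp only [hρ, if_pos rfl, if_neg hij, NTerm.eval]
                  erw [if_neg hij]
                  show act R f (act R 1 (xs i)) = act R g (act R h (xs i))
                  rw [hN.act_one, hN.act_comp, ← hcase]
              · -- g = h * f : substitute x_i ↦ h(x_j)
                set ρ : Fin n → NTerm M n :=
                  fun k => if k = i then some (h, j) else some (1, k) with hρ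
                obtain ⟨out, hout⟩ := ih _ (NAtom.subst ρ concl) (hlen' ρ)
                refine ⟨out, fun N' inst hN => ?_⟩
                refine Iff.trans ?_ (hout N' inst hN)
                refine elim_step hN hmem ρ ?_ ?_
                · intro xs hγ k
                  by_cases hk : k = i
                  · subst hk
                    simp only [hρ, if_pos rfl, NTerm.eval]
                    have hx : act R f (act R h (xs j)) = act R f (xs k) := by
                      rw [hN.act_comp, ← hcase]
                      exact hγ.symm
                    exact hN.act_inj f hx
                  · simp only [hρ, if_neg hk, NTerm.eval]
                    erw [if_neg hk]
                    exact hN.act_one _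
                · intro xs
                  show act R f ((ρ i).eval R xs) = act R g ((ρ j).eval R xs)
                  simp only [hρ, if_pos rfl, if_neg (Ne.symm hij), NTerm.eval]
                  erw [if_neg (Ne.symm hij)]
                  show act R f (act R h (xs j)) = act R g (act R 1 (xs j))
                  rw [hN.act_one, hN.act_comp, ← hcase]
        · exact absurd trivial hnl

end Core


/-! ### extracting `Good` from a model of `B` -/

section Extract

variable {R M : Type u} [Monoid M] {B : (LangM R M).Theory}
variable {N : Type w} [(LangM R M).Structure N] [Nonempty N]

theorem realize_wTerm (v : Empty ⊕ Fin k → N) :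
    Term.realize (L := LangM R M) v (wTerm R M) = wpt R M := by
  show Structure.funMap _ _ = _
  unfold wpt
  congr 1
  exact funext fun i => i.elim0

theorem good_of_model
    (hBrel : ∀ r : R,
      B ⊨ᵇ ((relAtom r (x1 R M)).imp (relAtom r (wTerm R M))).all)
    (hBw : ∀ f : M,
      B ⊨ᵇ ((fnApp f (wTerm R M)).bdEqual (wTerm R M) : (LangM R M).Sentence))
    (hBid : B ⊨ᵇ ((fnApp (1 : M) (x1 R M)).bdEqual (x1 R M)).all)
    (hBcomp : ∀ f g h : M, h = g * f →
      B ⊨ᵇ ((fnApp f (fnApp g (x1 R M))).bdEqual (fnApp h (x1 R M))).all)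
    (hBinj : ∀ f : M,
      B ⊨ᵇ (((fnApp f (x2 R M)).bdEqual (fnApp f (y2 R M))).imp
        ((x2 R M).bdEqual (y2 R M))).all.all)
    (hNB : N ⊨ B) : Good R M N := by
  haveI : N ⊨ B := hNB
  constructor
  · intro a
    have h := (hBid).realize_boundedFormula N (v := fun e => e.elim)
      (xs := (default : Fin 0 → N))
    rw [BoundedFormula.realize_all] at h
    have h' := h a
    rw [BoundedFormula.realize_bdEqual] at h'
    simp only [fnApp] at h'
    erw [Term.realize_functions_apply₁] at h'
    simpa [fnApp, x1, Term.realize_functions_apply₁, Fin.snoc, act] using h'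
  · intro f g a
    have h := (hBcomp f g (g * f) rfl).realize_boundedFormula N
      (v := fun e => e.elim) (xs := (default : Fin 0 → N))
    rw [BoundedFormula.realize_all] at h
    have h' := h a
    rw [BoundedFormula.realize_bdEqual] at h'
    simp only [fnApp] at h'
    erw [Term.realize_functions_apply₁, Term.realize_functions_apply₁,
      Term.realize_functions_apply₁] at h'
    simpa [fnApp, x1, Term.realize_functions_apply₁, Fin.snoc, act] using h'
  · intro f
    have h' := (hBw f).realize_boundedFormula N (v := fun e => e.elim)
      (xs := (default : Fin 0 → N))
    rw [BoundedFormula.realize_bdEqual] at h'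
    simp only [fnApp] at h'
    erw [Term.realize_functions_apply₁] at h'
    simpa [fnApp, Term.realize_functions_apply₁, realize_wTerm, act] using h'
  · intro f a b hab
    have h := (hBinj f).realize_boundedFormula N (v := fun e => e.elim)
      (xs := (default : Fin 0 → N))
    rw [BoundedFormula.realize_all] at h
    have h' := h a
    rw [BoundedFormula.realize_all] at h'
    have h'' := h' b
    rw [BoundedFormula.realize_imp, BoundedFormula.realize_bdEqual,
      BoundedFormula.realize_bdEqual] at h''
    simp only [fnApp, x2, y2, Function.comp_apply, Term.realize_functions_apply₁,
      Term.realize_var, Sum.elim_inr] at h''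
    erw [Term.realize_functions_apply₁, Term.realize_functions_apply₁] at h''
    simp only [Term.realize_var, Sum.elim_inr] at h''
    have hsnoc0 : (Fin.snoc (Fin.snoc (default : Fin 0 → N) a) b : Fin 2 → N) 0 = a := rfl
    have hsnoc1 : (Fin.snoc (Fin.snoc (default : Fin 0 → N) a) b : Fin 2 → N) 1 = b := rfl
    rw [hsnoc0, hsnoc1] at h''
    exact h'' hab
  · intro r a ha
    have h := (hBrel r).realize_boundedFormula N (v := fun e => e.elim)
      (xs := (default : Fin 0 → N))
    rw [BoundedFormula.realize_all] at h
    have h' := h a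
    rw [BoundedFormula.realize_imp] at h'
    simp only [relAtom, BoundedFormula.realize_rel₁, x1, Function.comp_apply,
      Term.realize_var, Sum.elim_inr, realize_wTerm] at h'
    erw [BoundedFormula.realize_rel₁, BoundedFormula.realize_rel₁] at h'
    simp only [Term.realize_var, Sum.elim_inr, realize_wTerm] at h'
    have hs : (Fin.snoc (default : Fin 0 → N) a : Fin 1 → N) 0 = a := rfl
    rw [hs] at h'
    exact h' ha

end Extract


/-! ### final assembly -/

section Assemble

variable {R M : Type u} [Monoid M]

def toSentence {n : ℕ} (p : List (NAtom R M n) × NAtom R M n) : (LangM R M).Sentence :=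
  BoundedFormula.alls (((p.1.map NAtom.toFormula).foldr (· ⊓ ·) ⊤).imp p.2.toFormula)

theorem toSentence_isQuasiIdentityN {n : ℕ} (p : List (NAtom R M n) × NAtom R M n) :
    IsQuasiIdentityN n (toSentence p) :=
  ⟨p.1.map NAtom.toFormula, p.2.toFormula,
    fun φ hφ => by
      obtain ⟨γ, _, rfl⟩ := List.mem_map.1 hφ
      exact γ.toFormula_isAtomic,
    p.2.toFormula_isAtomic, rfl⟩

theorem realize_toSentence {n : ℕ} {N : Type w} [(LangM R M).Structure N]
    (p : List (NAtom R M n) × NAtom R M n) :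
    N ⊨ toSentence p ↔ SatN N p.1 p.2 := by
  rw [Sentence.Realize, toSentence, BoundedFormula.realize_alls]
  refine forall_congr' fun xs => ?_
  rw [BoundedFormula.realize_imp, BoundedFormula.realize_foldr_inf]
  constructor
  · intro h hall
    rw [← realize_toFormula (default : Empty → N) xs]
    refine h fun φ hφ => ?_
    obtain ⟨γ, hγ, rfl⟩ := List.mem_map.1 hφ
    exact (realize_toFormula _ xs γ).2 (hall γ hγ)
  · intro h hall
    rw [realize_toFormula (default : Empty → N) xs]
    refine h fun γ hγ => ?_
    exact (realize_toFormula _ xs γ).1 (hall _ (List.mem_map_of_mem hγ))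

theorem normalize_list {n : ℕ} :
    ∀ (hyps : List ((LangM R M).BoundedFormula Empty n)), (∀ φ ∈ hyps, φ.IsAtomic) →
    ∃ nh : List (NAtom R M n), ∀ (N : Type w) [(LangM R M).Structure N], Good R M N →
      ∀ (v : Empty → N) (xs : Fin n → N),
        ((∀ φ ∈ hyps, φ.Realize v xs) ↔ ∀ γ ∈ nh, γ.Holds xs)
  | [], _ => ⟨[], fun N _ hN v xs => by simp⟩
  | φ :: l, h => by
      obtain ⟨γ, hγ⟩ := normalize_atomic (h φ (List.mem_cons_self))
      obtain ⟨nh, hnh⟩ := normalize_list l (fun ψ hψ => h ψ (List.mem_cons_of_mem _ hψ))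
      refine ⟨γ :: nh, fun N inst hN v xs => ?_⟩
      simp only [List.forall_mem_cons]
      exact and_congr (hγ N hN v xs) (hnh N hN v xs)

end Assemble

end QIRed

/-- Let `M` be a reductive monoid and let `B` be a theory in the
language `L` (unary relation symbols, unary function symbols indexed by `M`, one
constant `w`) satisfying: `∀x (A(x) → A(w))` for every unary relation symbol `A`;
`f(w) ≈ w` for every `f ∈ M`; `i(x) ≈ x` for the identity `i` of `M`, and
`f(g(x)) ≈ h(x)` whenever `h = gf` in `M`; and `∀x∀y (f(x) ≈ f(y) → x ≈ y)` for
every `f ∈ M`.  Then every quasi-identity of `L` is equivalent modulo `B` to a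
finite set of quasi-identities each containing at most one variable. -/
theorem quasiIdentity_one_variable_reduction (R M : Type u) [Monoid M]
    (hred : IsReductive M) (B : (LangM R M).Theory)
    (hBrel : ∀ r : R,
      B ⊨ᵇ ((relAtom r (x1 R M)).imp (relAtom r (wTerm R M))).all)
    (hBw : ∀ f : M,
      B ⊨ᵇ ((fnApp f (wTerm R M)).bdEqual (wTerm R M) : (LangM R M).Sentence))
    (hBid : B ⊨ᵇ ((fnApp (1 : M) (x1 R M)).bdEqual (x1 R M)).all)
    (hBcomp : ∀ f g h : M, h = g * f →
      B ⊨ᵇ ((fnApp f (fnApp g (x1 R M))).bdEqual (fnApp h (x1 R M))).all)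
    (hBinj : ∀ f : M,
      B ⊨ᵇ (((fnApp f (x2 R M)).bdEqual (fnApp f (y2 R M))).imp
        ((x2 R M).bdEqual (y2 R M))).all.all) :
    ∀ σ : (LangM R M).Sentence, IsQuasiIdentity σ →
      ∃ Ψ : (LangM R M).Theory, Ψ.Finite ∧
        (∀ τ ∈ Ψ, ∃ n ≤ 1, IsQuasiIdentityN n τ) ∧
        EquivModulo.{u, w} B {σ} Ψ := by
  intro σ hσ
  obtain ⟨n, hyps, concl, hhyps, hconcl, rfl⟩ := hσ
  obtain ⟨nh, hnh⟩ := QIRed.normalize_list.{u, w} hyps hhyps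
  obtain ⟨nc, hnc⟩ := QIRed.normalize_atomic.{u, w} hconcl
  obtain ⟨out, hout⟩ := QIRed.core.{u, w} hred nh.length nh nc le_rfl
  refine ⟨{τ | τ ∈ out.map QIRed.toSentence}, List.finite_toSet _, ?_, ?_⟩
  · intro τ hτ
    obtain ⟨p, hp, rfl⟩ := List.mem_map.1 hτ
    exact ⟨1, le_refl 1, QIRed.toSentence_isQuasiIdentityN p⟩
  · intro N inst hne
    rw [Theory.model_union_iff, Theory.model_union_iff]
    refine and_congr_right fun hB' => ?_
    have hN : QIRed.Good R M N := QIRed.good_of_model hBrel hBw hBid hBcomp hBinj hB'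
    have hσiff : (N ⊨ (BoundedFormula.alls ((hyps.foldr (· ⊓ ·) ⊤).imp concl)))
        ↔ QIRed.SatN N nh nc := by
      rw [Sentence.Realize, BoundedFormula.realize_alls]
      refine forall_congr' fun xs => ?_
      rw [BoundedFormula.realize_imp, BoundedFormula.realize_foldr_inf]
      exact imp_congr (hnh N hN default xs) (hnc N hN default xs)
    rw [Theory.model_singleton_iff, hσiff, hout N inst hN, Theory.model_iff]
    constructor
    · intro h τ hτ
      obtain ⟨p, hp, rfl⟩ := List.mem_map.1 hτ
      exact (QIRed.realize_toSentence p).2 (h p hp)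
    · intro h p hp
      exact (QIRed.realize_toSentence p).1 (h _ (List.mem_map_of_mem hp))
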